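/- For every variance function σ²(x)/2 with average σ̂²/2, the variational first eigenvalue is bounded by the ratio of the average variance to the variance of the stationary distribution: the infimum, over all continuously differentiable Q : (x₁, x₂) → ℝ satisfying ∫_{x₁}^{x₂} π(x) Q(x) dx = 0 and ∫_{x₁}^{x₂} π(x) Q(x)² dx = 1, of ∫_{x₁}^{x₂} (σ²(x)/2) π(x) (Q′(x))² dx is at most σ̂²/(2(m₂ − m₁²)). -/

import Mathlib

open MeasureTheory Set Filter

/-- For every variance function `V = σ²/2` with average `avg = σ̂²/2`, the
variational first eigenvalue — the infimum of the Rayleigh quotient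
`∫ (σ²/2) π (Q')²` over continuously differentiable `Q` on `(x₁, x₂)` with
`∫ π Q = 0` and `∫ π Q² = 1` — is at most `σ̂²/(2(m₂ - m₁²)) = avg/(m₂ - m₁²)`. -/
theorem statement1
    (x₁ x₂ : EReal) (hx : x₁ < x₂)
    (I : Set ℝ) (hI : I = {x : ℝ | x₁ < (x : EReal) ∧ (x : EReal) < x₂})
    (ρ : ℝ → ℝ)
    (hρcont : ContinuousOn ρ I)
    (hρpos : ∀ x ∈ I, 0 < ρ x)
    (hρzero : ∀ x ∉ I, ρ x = 0)
    (hρint : Integrable ρ)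
    (hρnorm : (∫ x, ρ x) = 1)
    (hint1 : Integrable fun x => x * ρ x)
    (hint2 : Integrable fun x => x ^ 2 * ρ x)
    (m₁ m₂ : ℝ)
    (hm₁ : m₁ = ∫ x, x * ρ x)
    (hm₂ : m₂ = ∫ x, x ^ 2 * ρ x)
    (hvar : 0 < m₂ - m₁ ^ 2)
    -- the variance function σ²(x)/2, nonnegative and measurable on (x₁, x₂)
    (V : ℝ → ℝ)
    (hVmeas : Measurable V)
    (hVnonneg : ∀ x ∈ I, 0 ≤ V x)
    (hVint : Integrable fun x => V x * ρ x)
    -- its average σ̂²/2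
    (avg : ℝ) (havgpos : 0 < avg)
    (havg : (∫ x, V x * ρ x) = avg) :
    sInf {r : ℝ |
        ∃ Q Q' : ℝ → ℝ,
          (∀ x ∈ I, HasDerivAt Q (Q' x) x) ∧
          ContinuousOn Q' I ∧
          (∫ x, ρ x * Q x) = 0 ∧
          (∫ x, ρ x * Q x ^ 2) = 1 ∧
          r = ∫ x, V x * ρ x * Q' x ^ 2}
      ≤ avg / (m₂ - m₁ ^ 2) := by

  set s : ℝ := Real.sqrt (m₂ - m₁ ^ 2) with hs
  have hspos : 0 < s := Real.sqrt_pos.mpr hvar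
  have hs2 : s ^ 2 = m₂ - m₁ ^ 2 := Real.sq_sqrt hvar.le
  refine csInf_le ⟨0, ?_⟩ ?_
  · rintro r ⟨Q, Q', hQ, hQ'c, h0, h1, rfl⟩
    apply integral_nonneg
    intro x
    by_cases hx' : x ∈ I
    · exact mul_nonneg (mul_nonneg (hVnonneg x hx') (hρpos x hx').le) (sq_nonneg _)
    · simp [hρzero x hx']
  · refine ⟨fun x => (x - m₁) / s, fun _ => 1 / s, ?_, continuousOn_const, ?_, ?_, ?_⟩
    · intro x _
      exact ((hasDerivAt_id x).sub_const m₁).div_const s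
    · have heq : (fun x => ρ x * ((x - m₁) / s))
          = fun x => (1 / s) * (x * ρ x) - (m₁ / s) * ρ x := by
        funext x; field_simp
      rw [heq, integral_sub (hint1.const_mul _) (hρint.const_mul _),
        integral_const_mul, integral_const_mul, ← hm₁, hρnorm]
      field_simp
      simp
    · have heq : (fun x => ρ x * ((x - m₁) / s) ^ 2)
          = fun x => (1 / s ^ 2) * (x ^ 2 * ρ x)
            - (2 * m₁ / s ^ 2) * (x * ρ x) + (m₁ ^ 2 / s ^ 2) * ρ x := by
        funext x; field_simp; ring
      have e1 : ∫ x, ((1 / s ^ 2 * (x ^ 2 * ρ x) - 2 * m₁ / s ^ 2 * (x * ρ x))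
            + m₁ ^ 2 / s ^ 2 * ρ x)
          = (∫ x, (1 / s ^ 2 * (x ^ 2 * ρ x) - 2 * m₁ / s ^ 2 * (x * ρ x)))
            + ∫ x, m₁ ^ 2 / s ^ 2 * ρ x :=
        integral_add ((hint2.const_mul _).sub (hint1.const_mul _)) (hρint.const_mul _)
      have e2 : ∫ x, (1 / s ^ 2 * (x ^ 2 * ρ x) - 2 * m₁ / s ^ 2 * (x * ρ x))
          = (∫ x, 1 / s ^ 2 * (x ^ 2 * ρ x)) - ∫ x, 2 * m₁ / s ^ 2 * (x * ρ x) :=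
        integral_sub (hint2.const_mul _) (hint1.const_mul _)
      rw [heq, e1, e2, integral_const_mul, integral_const_mul, integral_const_mul,
        ← hm₁, ← hm₂, hρnorm, hs2]
      field_simp
      ring
    · have heq : (fun x => V x * ρ x * (1 / s) ^ 2)
          = fun x => (1 / s ^ 2) * (V x * ρ x) := by
        funext x; field_simp
      rw [heq, integral_const_mul, havg, hs2]
      field_simp
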